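/- Consider a symmetric heavy top: 𝕀 = diag(I₁, I₁, I₃) with I₁, I₃ > 0, and displacement vector a = (0, 0, a₃) ∈ ℝ³ aligned with the third body axis. Let Δt > 0, m, g ∈ ℝ, Γ⁰, A, B ∈ ℝ³, and perform one step of the deterministic heavy-top midpoint integrator: set ξ := (1/2)𝕀⁻¹((A+B)/2), w := Δt·m·g·a, Γ̃ := cay(−Δtξ̂)Γ⁰, and suppose d⁻(Δt,ξ,A) − w × Γ̃ = d⁺(Δt,ξ,B); set Π⁰ := d⁺(Δt,ξ,A) and Π¹ := d⁻(Δt,ξ,B). Then the third component of the body angular momentum is exactly conserved: (Π¹)₃ = (Π⁰)₃. -/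

import Mathlib

open Matrix

noncomputable section

/-- The hat map: the 3×3 skew-symmetric matrix `ξ̂` with `ξ̂ v = ξ × v`. -/
def hat (ξ : Fin 3 → ℝ) : Matrix (Fin 3) (Fin 3) ℝ :=
  !![0, -ξ 2, ξ 1; ξ 2, 0, -ξ 0; -ξ 1, ξ 0, 0]

/-- The Cayley transform `cay(hξ̂) = (I − (h/2)ξ̂)⁻¹ (I + (h/2)ξ̂)`. -/
def cay (h : ℝ) (ξ : Fin 3 → ℝ) : Matrix (Fin 3) (Fin 3) ℝ :=
  (1 - (h / 2) • hat ξ)⁻¹ * (1 + (h / 2) • hat ξ)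

/-- `d⁺(h,ξ,Π) = Π + (h/2) ξ×Π − (h²/4)(ξ·Π)ξ`. -/
def dplus (h : ℝ) (ξ Pv : Fin 3 → ℝ) : Fin 3 → ℝ :=
  Pv + (h / 2) • (ξ ⨯₃ Pv) - (h ^ 2 / 4 * (ξ ⬝ᵥ Pv)) • ξ

/-- `d⁻(h,ξ,Π) = Π − (h/2) ξ×Π − (h²/4)(ξ·Π)ξ`. -/
def dminus (h : ℝ) (ξ Pv : Fin 3 → ℝ) : Fin 3 → ℝ :=
  Pv - (h / 2) • (ξ ⨯₃ Pv) - (h ^ 2 / 4 * (ξ ⬝ᵥ Pv)) • ξ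

/-- For a symmetric heavy top (`𝕀 = diag(I₁, I₁, I₃)`, displacement `a = (0,0,a₃)` along
the third body axis), one step of the deterministic heavy-top midpoint integrator exactly
conserves the third component of the body angular momentum. -/
theorem symmetric_heavy_top_conserves_third_momentum
    (I₁ I₃ : ℝ) (hI₁ : 0 < I₁) (hI₃ : 0 < I₃) (a₃ : ℝ)
    (Δt : ℝ) (hΔt : 0 < Δt) (m g : ℝ) (Γ₀ A B : Fin 3 → ℝ)
    (ξ w Γt Pv₀ Pv₁ : Fin 3 → ℝ)
    (hξ : ξ = (1 / 2 : ℝ) • (Matrix.diagonal ![I₁, I₁, I₃])⁻¹.mulVec ((1 / 2 : ℝ) • (A + B)))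
    (hw : w = (Δt * m * g) • (![0, 0, a₃] : Fin 3 → ℝ))
    (hΓt : Γt = (cay (-Δt) ξ).mulVec Γ₀)
    (hAB : dminus Δt ξ A - w ⨯₃ Γt = dplus Δt ξ B)
    (hPv₀ : Pv₀ = dplus Δt ξ A)
    (hPv₁ : Pv₁ = dminus Δt ξ B) :
    Pv₁ 2 = Pv₀ 2 := by
  have hd : (Matrix.diagonal ![I₁, I₁, I₃])⁻¹ = Matrix.diagonal ![I₁⁻¹, I₁⁻¹, I₃⁻¹] := by
    apply Matrix.inv_eq_left_inv
    rw [Matrix.diagonal_mul_diagonal]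
    ext i j
    fin_cases i <;> fin_cases j <;>
      simp [Matrix.diagonal, hI₁.ne', hI₃.ne']
  have hξ0 : ξ 0 = 1 / 2 * (I₁⁻¹ * (1 / 2 * (A 0 + B 0))) := by
    rw [hξ, hd]; simp [Matrix.mulVec_diagonal]; exact Or.inl (by ring)
  have hξ1 : ξ 1 = 1 / 2 * (I₁⁻¹ * (1 / 2 * (A 1 + B 1))) := by
    rw [hξ, hd]; simp [Matrix.mulVec_diagonal]; exact Or.inl (by ring)
  have hkey := congrFun hAB 2
  have hw0 : w 0 = 0 := by rw [hw]; simp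
  have hw1 : w 1 = 0 := by rw [hw]; simp
  simp only [dplus, dminus, cross_apply, Pi.sub_apply, Pi.add_apply, Pi.smul_apply,
    smul_eq_mul, Matrix.cons_val_two, Matrix.tail_cons, Matrix.head_cons, hw0, hw1,
    dotProduct, Fin.sum_univ_three] at hkey
  rw [hPv₀, hPv₁]
  simp only [dplus, dminus, cross_apply, Pi.sub_apply, Pi.add_apply, Pi.smul_apply,
    smul_eq_mul, Matrix.cons_val_two, Matrix.tail_cons, Matrix.head_cons,
    dotProduct, Fin.sum_univ_three]
  linear_combination (-1) * hkey - Δt * (A 1 + B 1) * hξ0 + Δt * (A 0 + B 0) * hξ1
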